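/- arXiv:2203.03579 — 4 statements merged into one kernel-verified Lean document; each statement's English description precedes it below -/
import Mathlib

section
/- For positive integers m_1, ..., m_n with n ≥ 2 and at least one m_i > 1, the lambda-number (minimum span of an L(2,1)-labelling) of the complete n-partite graph K_{m_1,...,m_n} equals (m_1 + m_2 + ... + m_n) + n - 2. -/
/-- An L(2,1)-labelling: adjacent vertices get labels differing by at least 2,
vertices at distance exactly two get different labels. -/
def IsL21Labelling {V : Type*} (G : SimpleGraph V) (f : V → ℕ) : Prop :=
  (∀ u v, G.Adj u v → 2 ≤ |(f u : ℤ) - (f v : ℤ)|) ∧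
  ∀ u v, G.dist u v = 2 → f u ≠ f v

/-- The lambda-number: the least `k` such that `G` has an L(2,1)-labelling with
labels in `{0, ..., k}` (equivalently, the minimum span). -/
noncomputable def lambdaNumber {V : Type*} (G : SimpleGraph V) : ℕ :=
  sInf {k | ∃ f : V → ℕ, IsL21Labelling G f ∧ ∀ v, f v ≤ k}

/-- The nonzero zero-divisors of `R`. -/
def zdVertices (R : Type*) [CommRing R] : Set R :=
  {x | x ≠ 0 ∧ ∃ y : R, y ≠ 0 ∧ x * y = 0}

/-- The zero-divisor graph of `R`: vertices are nonzero zero-divisors,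
distinct `x, y` adjacent iff `x * y = 0`. -/
def zdGraph (R : Type*) [CommRing R] : SimpleGraph (zdVertices R) where
  Adj x y := x ≠ y ∧ (x : R) * (y : R) = 0
  symm := by
    constructor
    rintro x y ⟨h1, h2⟩
    exact ⟨h1.symm, by rwa [mul_comm] at h2⟩
  loopless := by constructor; rintro x ⟨h, _⟩; exact h rfl

/-- Beck's zero-divisor graph of `R`: vertices are all of `R`,
distinct `x, y` adjacent iff `x * y = 0`. -/
def beckGraph (R : Type*) [CommRing R] : SimpleGraph R where
  Adj x y := x ≠ y ∧ x * y = 0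
  symm := by
    constructor
    rintro x y ⟨h1, h2⟩
    exact ⟨h1.symm, by rwa [mul_comm] at h2⟩
  loopless := by constructor; rintro x ⟨h, _⟩; exact h rfl

lemma cmg_adj {n : ℕ} (m : Fin n → ℕ) (u v : Σ i, Fin (m i)) :
    (SimpleGraph.completeMultipartiteGraph (fun i => Fin (m i))).Adj u v ↔ u.1 ≠ v.1 :=
  SimpleGraph.top_adj _ _

lemma cmg_dist_two {n : ℕ} (hn : 2 ≤ n) (m : Fin n → ℕ) (hpos : ∀ i, 0 < m i)
    {i : Fin n} {a b : Fin (m i)} (hab : a ≠ b) :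
    (SimpleGraph.completeMultipartiteGraph (fun i => Fin (m i))).dist ⟨i,a⟩ ⟨i,b⟩ = 2 := by
  set G := SimpleGraph.completeMultipartiteGraph (fun i => Fin (m i)) with hG
  obtain ⟨j, hj⟩ : ∃ j : Fin n, j ≠ i := by
    rcases eq_or_ne i ⟨0, by omega⟩ with h | h
    · exact ⟨⟨1, by omega⟩, by rw [h]; simp [Fin.ext_iff]⟩
    · exact ⟨⟨0, by omega⟩, fun hc => h hc.symm⟩
  set w : Σ l, Fin (m l) := ⟨j, ⟨0, hpos j⟩⟩ with hw
  have h1 : G.Adj ⟨i,a⟩ w := by rw [cmg_adj]; exact hj.symm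
  have h2 : G.Adj w ⟨i,b⟩ := by rw [cmg_adj]; exact hj
  have hle : G.dist ⟨i,a⟩ ⟨i,b⟩ ≤ 2 := by
    have := SimpleGraph.dist_le (SimpleGraph.Walk.cons h1 (SimpleGraph.Walk.cons h2 SimpleGraph.Walk.nil))
    simpa using this
  have hne : (⟨i,a⟩ : Σ l, Fin (m l)) ≠ ⟨i,b⟩ := by
    simp [Sigma.ext_iff, hab]
  have hpos' : 0 < G.dist ⟨i,a⟩ ⟨i,b⟩ :=
    SimpleGraph.Reachable.pos_dist_of_ne ⟨SimpleGraph.Walk.cons h1 (SimpleGraph.Walk.cons h2 SimpleGraph.Walk.nil)⟩ hne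
  have hone : G.dist ⟨i,a⟩ ⟨i,b⟩ ≠ 1 := by
    intro h
    have := SimpleGraph.dist_eq_one_iff_adj.mp h
    rw [cmg_adj] at this
    exact this rfl
  omega

lemma cmg_upper {n : ℕ} (hn : 2 ≤ n) (m : Fin n → ℕ) (hpos : ∀ i, 0 < m i) :
    ∃ f : (Σ i, Fin (m i)) → ℕ,
      IsL21Labelling (SimpleGraph.completeMultipartiteGraph (fun i => Fin (m i))) f ∧
      ∀ v, f v ≤ (∑ i, m i) + n - 2 := by
  set S : Fin n → ℕ := fun i => (∑ j ∈ Finset.Iio i, m j) + i with hS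
  refine ⟨fun v => S v.1 + v.2, ⟨?_, ?_⟩, ?_⟩
  · -- adjacency
    have key : ∀ (i j : Fin n), i < j → ∀ (a : Fin (m i)) (b : Fin (m j)),
        S i + a + 2 ≤ S j + b := by
      intro i j hij a b
      have hsub : insert i (Finset.Iio i) ⊆ Finset.Iio j := by
        intro x hx
        simp only [Finset.mem_insert, Finset.mem_Iio] at hx ⊢
        rcases hx with rfl | hx
        · exact hij
        · exact hx.trans hij
      have hsum : (∑ l ∈ insert i (Finset.Iio i), m l) ≤ ∑ l ∈ Finset.Iio j, m l :=
        Finset.sum_le_sum_of_subset hsub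
      rw [Finset.sum_insert (by simp)] at hsum
      have hij' : (i : ℕ) + 1 ≤ (j : ℕ) := hij
      have ha : (a : ℕ) + 1 ≤ m i := a.2
      simp only [hS]
      omega
    intro u v huv
    have h : u.1 ≠ v.1 := huv
    rcases lt_or_gt_of_ne h with hlt | hlt
    · have := key u.1 v.1 hlt u.2 v.2
      have : (S u.1 + u.2 : ℤ) + 2 ≤ (S v.1 + v.2 : ℤ) := by exact_mod_cast this
      rw [abs_sub_comm]
      rw [abs_of_nonneg (by push_cast; omega)]
      push_cast
      omega
    · have := key v.1 u.1 hlt v.2 u.2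
      have : (S v.1 + v.2 : ℤ) + 2 ≤ (S u.1 + u.2 : ℤ) := by exact_mod_cast this
      rw [abs_of_nonneg (by push_cast; omega)]
      push_cast
      omega
  · -- distance two
    intro u v hd
    have hne : u ≠ v := by
      intro h; subst h; simp [SimpleGraph.dist_self] at hd
    have hfst : u.1 = v.1 := by
      by_contra hc
      have : (SimpleGraph.completeMultipartiteGraph (fun i => Fin (m i))).Adj u v := hc
      rw [SimpleGraph.dist_eq_one_iff_adj.mpr this] at hd
      omega
    obtain ⟨i, a⟩ := u
    obtain ⟨j, b⟩ := v
    cases hfst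
    have hab : (a : ℕ) ≠ (b : ℕ) := by
      intro h
      exact hne (by simp [Sigma.ext_iff, Fin.ext_iff, h])
    simp only [ne_eq]
    omega
  · -- bound
    intro v
    obtain ⟨i, a⟩ := v
    have hsub : insert i (Finset.Iio i) ⊆ Finset.univ := by simp
    have hsum : (∑ l ∈ insert i (Finset.Iio i), m l) ≤ ∑ l, m l :=
      Finset.sum_le_sum_of_subset hsub
    rw [Finset.sum_insert (by simp)] at hsum
    have hi : (i : ℕ) ≤ n - 1 := by omega
    have ha : (a : ℕ) + 1 ≤ m i := a.2
    simp only [hS]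
    omega

lemma cmg_lower {n : ℕ} (hn : 2 ≤ n) (m : Fin n → ℕ) (hpos : ∀ i, 0 < m i)
    (k : ℕ) (f : (Σ i, Fin (m i)) → ℕ)
    (hf : IsL21Labelling (SimpleGraph.completeMultipartiteGraph (fun i => Fin (m i))) f)
    (hb : ∀ v, f v ≤ k) : (∑ i, m i) + n - 2 ≤ k := by
  classical
  obtain ⟨hadj, hdist⟩ := hf
  have hanei : ∀ i : Fin n, Nonempty (Fin (m i)) := fun i => ⟨⟨0, hpos i⟩⟩
  have hnecross : ∀ u v : Σ i, Fin (m i), u.1 ≠ v.1 → f u + 2 ≤ f v ∨ f v + 2 ≤ f u := by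
    intro u v h
    have := hadj u v ((cmg_adj m u v).mpr h)
    rcases abs_cases ((f u : ℤ) - (f v : ℤ)) with ⟨he, _⟩ | ⟨he, _⟩ <;> omega
  have hinj : Function.Injective f := by
    intro u v hfe
    by_contra hne
    rcases eq_or_ne u.1 v.1 with h1 | h1
    · obtain ⟨i, a⟩ := u
      obtain ⟨j, b⟩ := v
      cases h1
      have hab : a ≠ b := by
        intro h; exact hne (by simp [h])
      exact hdist _ _ (cmg_dist_two hn m hpos hab) hfe
    · rcases hnecross u v h1 with h | h <;> omega
  have hVne : Nonempty ((i : Fin n) × Fin (m i)) := ⟨⟨⟨0, by omega⟩, ⟨0, hpos _⟩⟩⟩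
  obtain ⟨v₀, hv₀⟩ := Finite.exists_max f
  have hamax : ∀ i : Fin n, ∃ a : Fin (m i), ∀ b : Fin (m i), f ⟨i, b⟩ ≤ f ⟨i, a⟩ :=
    fun i => Finite.exists_max (fun a => f ⟨i, a⟩)
  choose amax hamaxle using hamax
  have hTk : ∀ j : Fin n, j ≠ v₀.1 → f ⟨j, amax j⟩ + 2 ≤ k := by
    intro j hj
    rcases hnecross ⟨j, amax j⟩ v₀ hj with h | h
    · exact h.trans (hb v₀)
    · have := hv₀ (⟨j, amax j⟩ : Σ i, Fin (m i))
      omega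
  set φ : ((Σ i, Fin (m i)) ⊕ {j : Fin n // j ≠ v₀.1}) → Fin (k + 1) :=
    fun x => match x with
    | Sum.inl v => ⟨f v, Nat.lt_succ_of_le (hb v)⟩
    | Sum.inr j => ⟨f ⟨j.1, amax j.1⟩ + 1, by have := hTk j.1 j.2; omega⟩
    with hφ
  have hφinj : Function.Injective φ := by
    intro x y hxy
    have hxy' : (φ x : ℕ) = (φ y : ℕ) := congrArg Fin.val hxy
    match x, y with
    | Sum.inl u, Sum.inl v =>
      exact congrArg Sum.inl (hinj hxy')
    | Sum.inl u, Sum.inr j =>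
      exfalso
      simp only [hφ] at hxy'
      rcases eq_or_ne u.1 j.1 with h1 | h1
      · obtain ⟨i, a⟩ := u
        simp only at h1
        subst h1
        have := hamaxle j.1 a
        omega
      · rcases hnecross u ⟨j.1, amax j.1⟩ h1 with h | h <;> omega
    | Sum.inr j, Sum.inl u =>
      exfalso
      simp only [hφ] at hxy'
      rcases eq_or_ne u.1 j.1 with h1 | h1
      · obtain ⟨i, a⟩ := u
        simp only at h1
        subst h1
        have := hamaxle j.1 a
        omega
      · rcases hnecross u ⟨j.1, amax j.1⟩ h1 with h | h <;> omega
    | Sum.inr i, Sum.inr j =>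
      simp only [hφ, add_left_inj] at hxy'
      have hij : i.1 = j.1 := by
        by_contra hc
        rcases hnecross ⟨i.1, amax i.1⟩ ⟨j.1, amax j.1⟩ hc with h | h <;> omega
      exact congrArg Sum.inr (Subtype.ext hij)
  have hcard := Fintype.card_le_of_injective φ hφinj
  have hsub : Fintype.card {j : Fin n // j ≠ v₀.1} = n - 1 := by
    rw [Fintype.card_subtype_compl, Fintype.card_subtype_eq, Fintype.card_fin]
  rw [Fintype.card_sum, Fintype.card_sigma, hsub, Fintype.card_fin] at hcard
  simp only [Fintype.card_fin] at hcard
  omega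

/-- the lambda-number of the complete n-partite graph. -/
theorem lambda_completeMultipartite (n : ℕ) (hn : 2 ≤ n) (m : Fin n → ℕ)
    (hpos : ∀ i, 0 < m i) (hbig : ∃ i, 1 < m i) :
    lambdaNumber (SimpleGraph.completeMultipartiteGraph (fun i => Fin (m i))) =
      (∑ i, m i) + n - 2 := by
  obtain ⟨f, hf, hfb⟩ := cmg_upper hn m hpos
  apply le_antisymm
  · exact Nat.sInf_le ⟨f, hf, hfb⟩
  · exact le_csInf ⟨_, f, hf, hfb⟩ fun k hk => by
      obtain ⟨g, hg, hgb⟩ := hk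
      exact cmg_lower hn m hpos k g hg hgb
end

section
/- The lambda-number of the complete bipartite graph K_{m,n} equals m + n. -/
section Aux

variable {m n : ℕ}

private lemma cbg_dist_two (hm : 0 < m) (hn : 0 < n)
    {u v : Fin m ⊕ Fin n} (hne : u ≠ v)
    (hna : ¬ (completeBipartiteGraph (Fin m) (Fin n)).Adj u v) :
    (completeBipartiteGraph (Fin m) (Fin n)).dist u v = 2 := by
  set G := completeBipartiteGraph (Fin m) (Fin n)
  have hwalk : ∃ p : G.Walk u v, p.length = 2 := by
    match u, v with
    | Sum.inl i, Sum.inl i' =>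
        exact ⟨SimpleGraph.Walk.cons (by simp [G]) (SimpleGraph.Walk.cons (by simp [G])
          (SimpleGraph.Walk.nil (u := Sum.inl i')) : G.Walk (Sum.inr ⟨0, hn⟩) _), by simp⟩
    | Sum.inl i, Sum.inr j => exact absurd (by simp [G]) hna
    | Sum.inr j, Sum.inl i => exact absurd (by simp [G]) hna
    | Sum.inr j, Sum.inr j' =>
        exact ⟨SimpleGraph.Walk.cons (by simp [G]) (SimpleGraph.Walk.cons (by simp [G])
          (SimpleGraph.Walk.nil (u := Sum.inr j')) : G.Walk (Sum.inl ⟨0, hm⟩) _), by simp⟩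
  obtain ⟨p, hp⟩ := hwalk
  have hle : G.dist u v ≤ 2 := hp ▸ SimpleGraph.dist_le p
  have hpos : 0 < G.dist u v := SimpleGraph.Reachable.pos_dist_of_ne ⟨p⟩ hne
  have hne1 : G.dist u v ≠ 1 := fun h => hna (SimpleGraph.dist_eq_one_iff_adj.mp h)
  omega

private lemma cbg_inj (hm : 0 < m) (hn : 0 < n)
    {f : Fin m ⊕ Fin n → ℕ}
    (hf : IsL21Labelling (completeBipartiteGraph (Fin m) (Fin n)) f) :
    Function.Injective f := by
  intro u v h
  by_contra hne
  by_cases hadj : (completeBipartiteGraph (Fin m) (Fin n)).Adj u v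
  · have := hf.1 u v hadj
    rw [h] at this
    simp at this
  · exact hf.2 u v (cbg_dist_two hm hn hne hadj) h

end Aux

/-- the lambda-number of the complete bipartite graph `K_{m,n}` is `m + n`. -/
theorem lambda_completeBipartite (m n : ℕ) (hm : 0 < m) (hn : 0 < n) :
    lambdaNumber (completeBipartiteGraph (Fin m) (Fin n)) = m + n := by
  set G := completeBipartiteGraph (Fin m) (Fin n) with hG
  have hmem : (m + n) ∈ {k | ∃ f : Fin m ⊕ Fin n → ℕ, IsL21Labelling G f ∧ ∀ v, f v ≤ k} := by
    refine ⟨fun v => Sum.elim (fun i : Fin m => (i : ℕ)) (fun j : Fin n => m + 1 + (j : ℕ)) v, ⟨?_, ?_⟩, ?_⟩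
    · rintro (i | j) (i' | j') hadj
      · simp [hG] at hadj
      · have hi : (i : ℕ) < m := i.2
        simp only [Sum.elim_inl, Sum.elim_inr]
        rw [abs_sub_comm]
        rw [abs_of_nonneg (by push_cast; omega)]
        push_cast; omega
      · have hi : (i' : ℕ) < m := i'.2
        simp only [Sum.elim_inl, Sum.elim_inr]
        rw [abs_of_nonneg (by push_cast; omega)]
        push_cast; omega
      · simp [hG] at hadj
    · intro u v hd h
      have hne : u ≠ v := by rintro rfl; simp [SimpleGraph.dist_self] at hd
      apply hne
      match u, v with
      | Sum.inl i, Sum.inl i' => simp only [Sum.elim_inl] at h; exact congrArg _ (Fin.ext h)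
      | Sum.inl i, Sum.inr j =>
          simp only [Sum.elim_inl, Sum.elim_inr] at h; have := i.2; omega
      | Sum.inr j, Sum.inl i =>
          simp only [Sum.elim_inl, Sum.elim_inr] at h; have := i.2; omega
      | Sum.inr j, Sum.inr j' => simp only [Sum.elim_inr] at h; exact congrArg _ (Fin.ext (by omega))
    · rintro (i | j)
      · have := i.2; simp; omega
      · have := j.2; simp; omega
  have hlb : ∀ k ∈ {k | ∃ f : Fin m ⊕ Fin n → ℕ, IsL21Labelling G f ∧ ∀ v, f v ≤ k},
      m + n ≤ k := by
    rintro k ⟨f, hf, hbd⟩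
    by_contra hk
    push_neg at hk
    have hinj : Function.Injective f := cbg_inj hm hn hf
    -- the image of f has m + n elements inside range (k+1)
    have hsub : Finset.image f Finset.univ ⊆ Finset.range (k + 1) := by
      intro x hx
      simp only [Finset.mem_image] at hx
      obtain ⟨v, _, rfl⟩ := hx
      exact Finset.mem_range.mpr (Nat.lt_succ_of_le (hbd v))
    have hcard : (Finset.image f Finset.univ).card = m + n := by
      rw [Finset.card_image_of_injective _ hinj]
      simp
    have hle : m + n ≤ k + 1 := by
      have := Finset.card_le_card hsub
      rwa [hcard, Finset.card_range] at this
    have hkeq : k = m + n - 1 := by omega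
    have heq : Finset.image f Finset.univ = Finset.range (k + 1) := by
      apply Finset.eq_of_subset_of_card_le hsub
      rw [hcard, Finset.card_range]; omega
    have hsurj : ∀ t ≤ k, ∃ v, f v = t := by
      intro t ht
      have : t ∈ Finset.image f Finset.univ := by
        rw [heq]; exact Finset.mem_range.mpr (by omega)
      simpa using this
    -- adjacency = different sides
    have hadj_iff : ∀ u v : Fin m ⊕ Fin n, G.Adj u v ↔ u.isLeft ≠ v.isLeft := by
      rintro (i | j) (i' | j') <;> simp [hG]
    -- all vertices with labels along the chain have the same side
    obtain ⟨u0, hu0⟩ := hsurj 0 (Nat.zero_le _)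
    have hside : ∀ t ≤ k, ∀ v, f v = t → v.isLeft = u0.isLeft := by
      intro t
      induction t with
      | zero => intro _ v hv; rw [hinj (hv.trans hu0.symm)]
      | succ t ih =>
        intro ht v hv
        obtain ⟨w, hw⟩ := hsurj t (by omega)
        have hws := ih (by omega) w hw
        have : ¬ G.Adj v w := by
          intro hadj
          have := hf.1 v w hadj
          rw [hv, hw] at this
          push_cast at this
          rw [abs_of_nonneg (by omega)] at this
          omega
        rw [hadj_iff] at this
        push_neg at this
        rw [this, hws]
    have h1 : (Sum.inl ⟨0, hm⟩ : Fin m ⊕ Fin n).isLeft = u0.isLeft :=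
      hside _ (hbd _) _ rfl
    have h2 : (Sum.inr ⟨0, hn⟩ : Fin m ⊕ Fin n).isLeft = u0.isLeft :=
      hside _ (hbd _) _ rfl
    rw [← h2] at h1
    simp at h1
  exact le_antisymm (Nat.sInf_le hmem) (le_csInf ⟨m + n, hmem⟩ hlb)
end

section
/- Let p and q be primes (or prime powers) and let F_p, F_q be finite fields of orders p and q respectively. Then the zero-divisor graph Γ(F_p × F_q) is isomorphic to the complete bipartite graph K_{p-1, q-1}, and consequently λ(Γ(F_p × F_q)) = p + q - 2. -/
open SimpleGraph

lemma dist_le_of_iso {V W : Type*} {G : SimpleGraph V} {H : SimpleGraph W}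
    (φ : G ≃g H) (u v : V) : H.dist (φ u) (φ v) ≤ G.dist u v := by
  by_cases hr : G.Reachable u v
  · obtain ⟨p, hp⟩ := hr.exists_walk_length_eq_dist
    calc H.dist (φ u) (φ v) ≤ (p.map φ.toHom).length := SimpleGraph.dist_le _
      _ = G.dist u v := by rw [SimpleGraph.Walk.length_map, hp]
  · rw [SimpleGraph.dist_eq_zero_of_not_reachable hr,
        SimpleGraph.dist_eq_zero_of_not_reachable]
    intro hr'
    exact hr (by simpa using hr'.map φ.symm.toHom)

lemma dist_iso {V W : Type*} {G : SimpleGraph V} {H : SimpleGraph W}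
    (φ : G ≃g H) (u v : V) : H.dist (φ u) (φ v) = G.dist u v := by
  refine le_antisymm (dist_le_of_iso φ u v) ?_
  have := dist_le_of_iso φ.symm (φ u) (φ v)
  simpa using this

lemma l21_comp {V W : Type*} {G : SimpleGraph V} {H : SimpleGraph W}
    (φ : G ≃g H) {f : W → ℕ} (hf : IsL21Labelling H f) :
    IsL21Labelling G (f ∘ φ) := by
  constructor
  · intro u v h
    exact hf.1 _ _ (φ.map_adj_iff.mpr h)
  · intro u v h
    exact hf.2 _ _ (by rw [dist_iso φ u v]; exact h)

lemma lambda_set_subset {V W : Type*} {G : SimpleGraph V} {H : SimpleGraph W}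
    (φ : G ≃g H) :
    {k | ∃ f : W → ℕ, IsL21Labelling H f ∧ ∀ v, f v ≤ k} ⊆
    {k | ∃ f : V → ℕ, IsL21Labelling G f ∧ ∀ v, f v ≤ k} := by
  rintro k ⟨f, hf, hb⟩
  exact ⟨f ∘ φ, l21_comp φ hf, fun v => hb _⟩

lemma lambda_iso {V W : Type*} {G : SimpleGraph V} {H : SimpleGraph W}
    (φ : G ≃g H) : lambdaNumber G = lambdaNumber H := by
  unfold lambdaNumber
  congr 1
  exact le_antisymm (lambda_set_subset φ.symm) (lambda_set_subset φ)

lemma kbip_adj {m n : ℕ} (u v : Fin m ⊕ Fin n) :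
    (completeBipartiteGraph (Fin m) (Fin n)).Adj u v ↔ u.isLeft ≠ v.isLeft := by
  cases u <;> cases v <;> simp [completeBipartiteGraph]

lemma kbip_dist_two {m n : ℕ} (hm : 0 < m) (hn : 0 < n) (u v : Fin m ⊕ Fin n)
    (hne : u ≠ v) (hside : u.isLeft = v.isLeft) :
    (completeBipartiteGraph (Fin m) (Fin n)).dist u v = 2 := by
  set G := completeBipartiteGraph (Fin m) (Fin n) with hG
  have hnadj : ¬ G.Adj u v := by rw [hG, kbip_adj]; simp [hside]
  obtain ⟨w, hw1, hw2⟩ : ∃ w, G.Adj u w ∧ G.Adj w v := by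
    cases hu : u.isLeft
    · exact ⟨Sum.inl ⟨0, hm⟩, by rw [hG, kbip_adj]; simp [hu],
        by rw [hG, kbip_adj]; simp [← hside, hu]⟩
    · exact ⟨Sum.inr ⟨0, hn⟩, by rw [hG, kbip_adj]; simp [hu],
        by rw [hG, kbip_adj]; simp [← hside, hu]⟩
  have hle : G.dist u v ≤ 2 := by
    have := SimpleGraph.dist_le
      (SimpleGraph.Walk.cons hw1 (SimpleGraph.Walk.cons hw2 SimpleGraph.Walk.nil))
    simpa using this
  have h0 : G.dist u v ≠ 0 := by
    intro h
    rw [SimpleGraph.dist_eq_zero_iff_eq_or_not_reachable] at h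
    rcases h with h | h
    · exact hne h
    · exact h ⟨SimpleGraph.Walk.cons hw1 (SimpleGraph.Walk.cons hw2 SimpleGraph.Walk.nil)⟩
  have h1 : G.dist u v ≠ 1 := by
    intro h
    exact hnadj (SimpleGraph.dist_eq_one_iff_adj.mp h)
  omega

lemma kbip_lambda {m n : ℕ} (hm : 0 < m) (hn : 0 < n) :
    lambdaNumber (completeBipartiteGraph (Fin m) (Fin n)) = m + n := by
  set G := completeBipartiteGraph (Fin m) (Fin n) with hG
  have hmem : (m + n) ∈ {k | ∃ f : Fin m ⊕ Fin n → ℕ, IsL21Labelling G f ∧ ∀ v, f v ≤ k} := by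
    refine ⟨Sum.elim (fun i => (i : ℕ)) (fun j => m + 1 + (j : ℕ)), ⟨?_, ?_⟩, ?_⟩
    · intro u v hadj
      rw [hG, kbip_adj] at hadj
      rcases u with i | j <;> rcases v with i' | j' <;> simp at hadj ⊢
      · rw [le_abs]; right
        have h1 : (i : ℤ) < m := by exact_mod_cast i.isLt
        omega
      · rw [le_abs]; left
        have h1 : (i' : ℤ) < m := by exact_mod_cast i'.isLt
        omega
    · intro u v hdist
      have hne : u ≠ v := by
        rintro rfl; rw [SimpleGraph.dist_self] at hdist; omega
      rcases u with i | j <;> rcases v with i' | j' <;> simp at hne ⊢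
      · exact fun h => hne (Fin.ext h)
      · have := i.isLt; omega
      · have := i'.isLt; omega
      · intro h; exact hne (Fin.ext (by omega))
    · rintro (i | j)
      · have := i.isLt; simp; omega
      · have := j.isLt; simp; omega
  refine le_antisymm (Nat.sInf_le hmem) (le_csInf ⟨m + n, hmem⟩ ?_)
  rintro k ⟨f, ⟨hadj, hdist⟩, hb⟩
  by_contra hklt
  push_neg at hklt
  have hinj : Function.Injective f := by
    intro u v hfv
    by_contra hne
    by_cases hside : u.isLeft = v.isLeft
    · exact hdist u v (kbip_dist_two hm hn u v hne hside) hfv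
    · have h2 := hadj u v (by rw [hG, kbip_adj]; exact hside)
      rw [hfv, sub_self, abs_zero] at h2; omega
  have hcard : m + n ≤ k + 1 := by
    have : Function.Injective (fun v => (⟨f v, by have := hb v; omega⟩ : Fin (k + 1))) := by
      intro u v h
      exact hinj (by simpa [Fin.ext_iff] using h)
    have := Fintype.card_le_of_injective _ this
    simpa using this
  have hkeq : k + 1 = m + n := by omega
  have hsurj : ∀ i : ℕ, i ≤ k → ∃ v, f v = i := by
    have hbij : Function.Bijective (fun v => (⟨f v, by have := hb v; omega⟩ : Fin (k + 1))) := by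
      rw [Fintype.bijective_iff_injective_and_card]
      refine ⟨fun u v h => hinj (by simpa [Fin.ext_iff] using h), by simp; omega⟩
    intro i hi
    obtain ⟨v, hv⟩ := hbij.2 ⟨i, by omega⟩
    exact ⟨v, by simpa [Fin.ext_iff] using hv⟩
  have step : ∀ u v : Fin m ⊕ Fin n, f v = f u + 1 → u.isLeft = v.isLeft := by
    intro u v h
    by_contra hside
    have h2 := hadj u v (by rw [hG, kbip_adj]; exact hside)
    rw [h] at h2
    rcases abs_cases ((f u : ℤ) - ((f u : ℕ) + 1 : ℕ)) with ⟨he, _⟩ | ⟨he, _⟩ <;>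
      rw [he] at h2 <;> push_cast at h2 <;> omega
  have main : ∀ i : ℕ, i ≤ k → ∀ u v : Fin m ⊕ Fin n, f u = 0 → f v = i →
      u.isLeft = v.isLeft := by
    intro i
    induction i with
    | zero => intro _ u v hu hv; rw [hinj (hu.trans hv.symm)]
    | succ i ih =>
      intro hik u v hu hv
      obtain ⟨w, hw⟩ := hsurj i (by omega)
      exact (ih (by omega) u w hu hw).trans (step w v (by omega))
  obtain ⟨u0, hu0⟩ := hsurj 0 (by omega)
  have hL := main (f (Sum.inl ⟨0, hm⟩)) (hb _) u0 _ hu0 rfl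
  have hR := main (f (Sum.inr ⟨0, hn⟩)) (hb _) u0 _ hu0 rfl
  rw [hL] at hR
  simp at hR

section Fields

variable {F₁ F₂ : Type*} [Field F₁] [Field F₂]

lemma mem_zd_iff (x : F₁ × F₂) :
    x ∈ zdVertices (F₁ × F₂) ↔ (x.1 ≠ 0 ∧ x.2 = 0) ∨ (x.1 = 0 ∧ x.2 ≠ 0) := by
  constructor
  · rintro ⟨hx, y, hy, hxy⟩
    have h1 : x.1 * y.1 = 0 := congrArg Prod.fst hxy
    have h2 : x.2 * y.2 = 0 := congrArg Prod.snd hxy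
    have hy' : ¬(y.1 = 0 ∧ y.2 = 0) := fun ⟨a, b⟩ => hy (Prod.ext a b)
    have hx' : ¬(x.1 = 0 ∧ x.2 = 0) := fun ⟨a, b⟩ => hx (Prod.ext a b)
    rcases mul_eq_zero.mp h1 with a | a <;> rcases mul_eq_zero.mp h2 with b | b <;> tauto
  · rintro (⟨h1, h2⟩ | ⟨h1, h2⟩)
    · exact ⟨by simp [Prod.ext_iff, h1], (0, 1), by simp [Prod.ext_iff], by
        simp [Prod.ext_iff, h2]⟩
    · exact ⟨by simp [Prod.ext_iff, h2], (1, 0), by simp [Prod.ext_iff], by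
        simp [Prod.ext_iff, h1]⟩

lemma zd_fst_ne {x : zdVertices (F₁ × F₂)} (h : (x : F₁ × F₂).2 = 0) :
    (x : F₁ × F₂).1 ≠ 0 := by
  rcases (mem_zd_iff _).mp x.2 with ⟨h1, _⟩ | ⟨_, h2⟩
  · exact h1
  · exact absurd h h2

lemma zd_fst_eq {x : zdVertices (F₁ × F₂)} (h : (x : F₁ × F₂).2 ≠ 0) :
    (x : F₁ × F₂).1 = 0 := by
  rcases (mem_zd_iff _).mp x.2 with ⟨_, h2⟩ | ⟨h1, _⟩
  · exact absurd h2 h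
  · exact h1

noncomputable def zdEquiv (F₁ F₂ : Type*) [Field F₁] [Field F₂] :
    zdVertices (F₁ × F₂) ≃ {a : F₁ // a ≠ 0} ⊕ {b : F₂ // b ≠ 0} := by
  classical
  exact {
    toFun := fun x => if h : (x : F₁ × F₂).2 = 0
      then Sum.inl ⟨(x : F₁ × F₂).1, zd_fst_ne h⟩
      else Sum.inr ⟨(x : F₁ × F₂).2, h⟩
    invFun := fun s => Sum.elim
      (fun a => ⟨(a.1, 0), (mem_zd_iff _).mpr (Or.inl ⟨a.2, rfl⟩)⟩)
      (fun b => ⟨(0, b.1), (mem_zd_iff _).mpr (Or.inr ⟨rfl, b.2⟩)⟩) s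
    left_inv := by
      intro x
      by_cases h : (x : F₁ × F₂).2 = 0
      · simp only [h, dif_pos]
        exact Subtype.ext (Prod.ext rfl h.symm)
      · simp only [h, dif_neg, not_false_iff]
        exact Subtype.ext (Prod.ext (zd_fst_eq h).symm rfl)
    right_inv := by
      rintro (a | b)
      · simp
      · simp only [Sum.elim_inr]
        exact dif_neg b.2
  }

lemma zd_adj_iff (x y : zdVertices (F₁ × F₂)) :
    (zdGraph (F₁ × F₂)).Adj x y ↔
      ((x : F₁ × F₂).2 = 0 ∧ (y : F₁ × F₂).2 ≠ 0) ∨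
      ((x : F₁ × F₂).2 ≠ 0 ∧ (y : F₁ × F₂).2 = 0) := by
  constructor
  · rintro ⟨hne, hxy⟩
    have h2 : (x : F₁ × F₂).2 * (y : F₁ × F₂).2 = 0 := congrArg Prod.snd hxy
    by_cases hx : (x : F₁ × F₂).2 = 0
    · refine Or.inl ⟨hx, ?_⟩
      intro hy
      have h1 : (x : F₁ × F₂).1 * (y : F₁ × F₂).1 = 0 := congrArg Prod.fst hxy
      rcases mul_eq_zero.mp h1 with a | a
      · exact zd_fst_ne hx a
      · exact zd_fst_ne hy a
    · refine Or.inr ⟨hx, ?_⟩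
      rcases mul_eq_zero.mp h2 with a | a
      · exact absurd a hx
      · exact a
  · rintro (⟨hx, hy⟩ | ⟨hx, hy⟩)
    · refine ⟨fun h => hy (h ▸ hx), ?_⟩
      have := zd_fst_eq hy
      ext
      · show (x : F₁ × F₂).1 * (y : F₁ × F₂).1 = 0
        rw [this, mul_zero]
      · show (x : F₁ × F₂).2 * (y : F₁ × F₂).2 = 0
        rw [hx, zero_mul]
    · refine ⟨fun h => hx (h ▸ hy), ?_⟩
      have := zd_fst_eq hx
      ext
      · show (x : F₁ × F₂).1 * (y : F₁ × F₂).1 = 0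
        rw [this, zero_mul]
      · show (x : F₁ × F₂).2 * (y : F₁ × F₂).2 = 0
        rw [hy, mul_zero]

end Fields

/-- `Γ(F_p × F_q) ≅ K_{p-1,q-1}` and `λ(Γ(F_p × F_q)) = p + q - 2`. -/
theorem zdGraph_prod_fields (F₁ F₂ : Type*) [Field F₁] [Field F₂] [Fintype F₁] [Fintype F₂]
    (p q : ℕ) (hp : Fintype.card F₁ = p) (hq : Fintype.card F₂ = q) :
    Nonempty (zdGraph (F₁ × F₂) ≃g completeBipartiteGraph (Fin (p - 1)) (Fin (q - 1))) ∧
    lambdaNumber (zdGraph (F₁ × F₂)) = p + q - 2 := by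
  classical
  have hp2 : 2 ≤ p := hp ▸ Fintype.one_lt_card
  have hq2 : 2 ≤ q := hq ▸ Fintype.one_lt_card
  have c1 : Fintype.card {a : F₁ // a ≠ 0} = p - 1 := by
    rw [Fintype.card_subtype_compl, Fintype.card_subtype_eq, hp]
  have c2 : Fintype.card {b : F₂ // b ≠ 0} = q - 1 := by
    rw [Fintype.card_subtype_compl, Fintype.card_subtype_eq, hq]
  let e : zdVertices (F₁ × F₂) ≃ Fin (p - 1) ⊕ Fin (q - 1) :=
    (zdEquiv F₁ F₂).trans
      (Equiv.sumCongr (Fintype.equivFinOfCardEq c1) (Fintype.equivFinOfCardEq c2))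
  have hleft : ∀ x : zdVertices (F₁ × F₂),
      (e x).isLeft = true ↔ (x : F₁ × F₂).2 = 0 := by
    intro x
    by_cases h : (x : F₁ × F₂).2 = 0 <;>
      simp [e, zdEquiv, Equiv.sumCongr, h]
  have hleft' : ∀ x : zdVertices (F₁ × F₂),
      (e x).isLeft = false ↔ (x : F₁ × F₂).2 ≠ 0 := by
    intro x
    constructor
    · intro h hc
      have := (hleft x).mpr hc
      rw [h] at this
      exact Bool.false_ne_true this
    · intro h
      cases hx : (e x).isLeft
      · rfl
      · exact absurd ((hleft x).mp hx) h
  have hiso : zdGraph (F₁ × F₂) ≃g completeBipartiteGraph (Fin (p - 1)) (Fin (q - 1)) := by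
    refine ⟨e, ?_⟩
    intro a b
    rw [kbip_adj, zd_adj_iff]
    constructor
    · intro h
      by_cases ha : (a : F₁ × F₂).2 = 0 <;> by_cases hb : (b : F₁ × F₂).2 = 0
      · exact absurd (((hleft a).mpr ha).trans ((hleft b).mpr hb).symm) h
      · exact Or.inl ⟨ha, hb⟩
      · exact Or.inr ⟨ha, hb⟩
      · exact absurd (((hleft' a).mpr ha).trans ((hleft' b).mpr hb).symm) h
    · rintro (⟨ha, hb⟩ | ⟨ha, hb⟩)
      · rw [(hleft a).mpr ha, (hleft' b).mpr hb]; simp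
      · rw [(hleft' a).mpr ha, (hleft b).mpr hb]; simp
  refine ⟨⟨hiso⟩, ?_⟩
  rw [lambda_iso hiso, kbip_lambda (by omega) (by omega)]
  omega
end

section
/- For a prime p and integer n ≥ 3, the lambda-number of the zero-divisor graph Γ(Z_{p^n}) equals p^{n-1} + p - 3. -/
section Helpers

lemma card_pos_dvd (d : ℕ) : ∀ M, ((Finset.range M).filter (fun m => d ∣ m ∧ m ≠ 0)).card = (M - 1) / d := by
  intro M
  induction M with
  | zero => simp
  | succ M IH =>
    rw [Finset.range_add_one, Finset.filter_insert]
    rcases Nat.eq_zero_or_pos M with h0 | hMpos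
    · subst h0; simp
    · have hM1 : M - 1 + 1 = M := by omega
      have hdiv : M / d = (M - 1) / d + if d ∣ M then 1 else 0 := by
        conv_lhs => rw [← hM1]
        rw [Nat.succ_div, hM1]
      by_cases h : d ∣ M ∧ M ≠ 0
      · rw [if_pos h, Finset.card_insert_of_notMem (by simp), IH]
        simp only [Nat.add_sub_cancel]
        rw [hdiv, if_pos h.1]
      · rw [if_neg h, IH]
        simp only [Nat.add_sub_cancel]
        have hnd : ¬ d ∣ M := fun hd' => h ⟨hd', by omega⟩
        rw [hdiv, if_neg hnd]
        omega

lemma count_lt_count {P : ℕ → Prop} [DecidablePred P] {j j' : ℕ} (hj : j < j') (hPj : P j) :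
    ((Finset.range j).filter (fun m => P m)).card < ((Finset.range j').filter (fun m => P m)).card := by
  apply Finset.card_lt_card
  rw [Finset.ssubset_iff_of_subset (Finset.filter_subset_filter _ (Finset.range_subset_range.mpr (le_of_lt hj)))]
  exact ⟨j, by simp [hj, hPj], by simp⟩

lemma helperDiv (p a : ℕ) (hp : 1 ≤ p) (ha : 1 ≤ a) : (p * a - 1) / p = a - 1 := by
  obtain ⟨p', rfl⟩ : ∃ p', p = p' + 1 := ⟨p - 1, by omega⟩
  obtain ⟨a', rfl⟩ : ∃ a', a = a' + 1 := ⟨a - 1, by omega⟩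
  have h : (p' + 1) * (a' + 1) - 1 = p' + a' * (p' + 1) := by
    have e : (p' + 1) * (a' + 1) = (p' + a' * (p' + 1)) + 1 := by ring
    omega
  rw [h, Nat.add_mul_div_right _ _ (by omega), Nat.div_eq_of_lt (by omega)]
  omega

def labA (p a j : ℕ) : ℕ := ((Finset.range j).filter (fun m => p ∣ m ∧ ¬ a ∣ m)).card
def labB (p j : ℕ) : ℕ := ((Finset.range j).filter (fun m => ¬ p ∣ m)).card

noncomputable def lab (p a j : ℕ) : ℕ :=
  if a ∣ j then (p*a - p - 1) + 2 * (j / a)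
  else if p ∣ j then 2 * labA p a j
  else if labB p j < a - p then 2 * labB p j + 1 else (a - p) + labB p j

lemma labA_total (p a : ℕ) (hp : 2 ≤ p) (hpa : p ∣ a) (hap : p ≤ a) : labA p a (p*a) = a - p := by
  have hsplit : (Finset.range (p*a)).filter (fun m => p ∣ m ∧ m ≠ 0) =
      (Finset.range (p*a)).filter (fun m => p ∣ m ∧ ¬ a ∣ m) ∪
      (Finset.range (p*a)).filter (fun m => a ∣ m ∧ m ≠ 0) := by
    ext m
    simp only [Finset.mem_filter, Finset.mem_union, Finset.mem_range]
    constructor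
    · rintro ⟨hm, hpm, hm0⟩
      by_cases hba : a ∣ m
      · exact Or.inr ⟨hm, hba, hm0⟩
      · exact Or.inl ⟨hm, hpm, hba⟩
    · rintro (⟨hm, hpm, hba⟩ | ⟨hm, hba, hm0⟩)
      · exact ⟨hm, hpm, fun h0 => hba (by simp [h0])⟩
      · exact ⟨hm, hpa.trans hba, hm0⟩
  have hdisj : Disjoint ((Finset.range (p*a)).filter (fun m => p ∣ m ∧ ¬ a ∣ m))
      ((Finset.range (p*a)).filter (fun m => a ∣ m ∧ m ≠ 0)) := by
    rw [Finset.disjoint_left]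
    intro m h1 h2
    simp only [Finset.mem_filter] at h1 h2
    exact h1.2.2 h2.2.1
  have hcard := card_pos_dvd p (p*a)
  rw [hsplit, Finset.card_union_of_disjoint hdisj, card_pos_dvd a (p*a)] at hcard
  rw [helperDiv p a (by omega) (by omega)] at hcard
  rw [mul_comm p a, helperDiv a p (by omega) (by omega), mul_comm a p] at hcard
  unfold labA
  omega

lemma labB_total (p a : ℕ) (hp : 2 ≤ p) (hap : p ≤ a) : labB p (p*a) = p*a - a := by
  have h1 := Finset.card_filter_add_card_filter_not (s := Finset.range (p*a))
    (p := fun m => p ∣ m)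
  have h2 : (Finset.range (p*a)).filter (fun m => p ∣ m) =
      insert 0 ((Finset.range (p*a)).filter (fun m => p ∣ m ∧ m ≠ 0)) := by
    ext m
    simp only [Finset.mem_filter, Finset.mem_insert, Finset.mem_range]
    constructor
    · rintro ⟨hm, hpm⟩
      rcases Nat.eq_zero_or_pos m with h0 | h0
      · exact Or.inl h0
      · exact Or.inr ⟨hm, hpm, by omega⟩
    · rintro (rfl | ⟨hm, hpm, hm0⟩)
      · exact ⟨Nat.mul_pos (by omega) (by omega), dvd_zero p⟩
      · exact ⟨hm, hpm⟩
  rw [h2, Finset.card_insert_of_notMem (by simp), card_pos_dvd p (p*a),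
    helperDiv p a (by omega) (by omega), Finset.card_range] at h1
  have h2a : 2*a ≤ p*a := Nat.mul_le_mul_right a hp
  unfold labB
  omega

lemma labA_mono {p a j j' : ℕ} (hlt : j < j') (h1 : p ∣ j) (h2 : ¬ a ∣ j) :
    labA p a j < labA p a j' := by
  unfold labA; exact count_lt_count hlt ⟨h1, h2⟩

lemma labB_mono {p j j' : ℕ} (hlt : j < j') (h1 : ¬ p ∣ j) : labB p j < labB p j' := by
  unfold labB; exact count_lt_count hlt h1

lemma lab_nonU_le {p a : ℕ} (hp : 2 ≤ p) (hpa : p ∣ a) (hap : p ≤ a) {j : ℕ}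
    (hj2 : j < p*a) (hU : ¬ a ∣ j) : lab p a j ≤ p*a - p - 1 := by
  have h2a : 2*a ≤ p*a := Nat.mul_le_mul_right a hp
  unfold lab
  rw [if_neg hU]
  by_cases hpj : p ∣ j
  · rw [if_pos hpj]
    have hA : labA p a j < a - p := labA_total p a hp hpa hap ▸ labA_mono hj2 hpj hU
    obtain ⟨b, hb⟩ : ∃ b, b = p*a := ⟨_, rfl⟩
    rw [← hb] at h2a ⊢
    omega
  · rw [if_neg hpj]
    have hB : labB p j < p*a - a := labB_total p a hp hap ▸ labB_mono hj2 hpj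
    obtain ⟨b, hb⟩ : ∃ b, b = p*a := ⟨_, rfl⟩
    rw [← hb] at h2a hB ⊢
    split_ifs <;> omega

lemma lab_U_eq {p a j : ℕ} (hU : a ∣ j) : lab p a j = (p*a - p - 1) + 2 * (j / a) := by
  unfold lab; rw [if_pos hU]

lemma lab_U_bounds {p a : ℕ} (hp : 2 ≤ p) (hap : p ≤ a) {j : ℕ}
    (hj1 : 1 ≤ j) (hj2 : j < p*a) (hU : a ∣ j) :
    p*a - p + 1 ≤ lab p a j ∧ lab p a j ≤ p*a + p - 3 := by
  have h2a : 2*a ≤ p*a := Nat.mul_le_mul_right a hp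
  have ha0 : 0 < a := by omega
  have hc1 : 1 ≤ j / a := (Nat.one_le_div_iff ha0).mpr (Nat.le_of_dvd (by omega) hU)
  have hc2 : j / a < p := (Nat.div_lt_iff_lt_mul ha0).mpr hj2
  rw [lab_U_eq hU]
  obtain ⟨b, hb⟩ : ∃ b, b = p*a := ⟨_, rfl⟩
  rw [← hb] at h2a ⊢
  omega

lemma lab_inj {p a : ℕ} (hp : 2 ≤ p) (hpa : p ∣ a) (hap : p ≤ a) {j j' : ℕ}
    (hj1 : 1 ≤ j) (hj2 : j < p*a) (hj1' : 1 ≤ j') (hj2' : j' < p*a)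
    (h : lab p a j = lab p a j') : j = j' := by
  have h2a : 2*a ≤ p*a := Nat.mul_le_mul_right a hp
  by_cases hU : a ∣ j <;> by_cases hU' : a ∣ j'
  · rw [lab_U_eq hU, lab_U_eq hU'] at h
    have hdd : j / a = j' / a := by
      obtain ⟨b, hb⟩ : ∃ b, b = p*a := ⟨_, rfl⟩
      rw [← hb] at h h2a
      omega
    rw [← Nat.mul_div_cancel' hU, ← Nat.mul_div_cancel' hU', hdd]
  · have b1 := lab_U_bounds hp hap hj1 hj2 hU
    have b2 := lab_nonU_le hp hpa hap hj2' hU'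
    obtain ⟨b, hb⟩ : ∃ b, b = p*a := ⟨_, rfl⟩
    rw [← hb] at h2a b1 b2
    omega
  · have b1 := lab_U_bounds hp hap hj1' hj2' hU'
    have b2 := lab_nonU_le hp hpa hap hj2 hU
    obtain ⟨b, hb⟩ : ∃ b, b = p*a := ⟨_, rfl⟩
    rw [← hb] at h2a b1 b2
    omega
  · unfold lab at h
    rw [if_neg hU, if_neg hU'] at h
    by_cases hpj : p ∣ j <;> by_cases hpj' : p ∣ j'
    · rw [if_pos hpj, if_pos hpj'] at h
      rcases lt_trichotomy j j' with hlt | heq | hgt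
      · have := labA_mono (a := a) hlt hpj hU
        omega
      · exact heq
      · have := labA_mono (a := a) hgt hpj' hU'
        omega
    · rw [if_pos hpj, if_neg hpj'] at h
      have hA : labA p a j < a - p := labA_total p a hp hpa hap ▸ labA_mono hj2 hpj hU
      split_ifs at h <;> omega
    · rw [if_neg hpj, if_pos hpj'] at h
      have hA : labA p a j' < a - p := labA_total p a hp hpa hap ▸ labA_mono hj2' hpj' hU'
      split_ifs at h <;> omega
    · rw [if_neg hpj, if_neg hpj'] at h
      rcases lt_trichotomy j j' with hlt | heq | hgt
      · have hne := labB_mono hlt hpj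
        split_ifs at h <;> omega
      · exact heq
      · have hne := labB_mono hgt hpj'
        split_ifs at h <;> omega

lemma lab_gap {p a : ℕ} (hp : 2 ≤ p) (hpa : p ∣ a) (hap : p ≤ a)
    (hcop : ∀ m, ¬ p ∣ m → Nat.Coprime a m) {j j' : ℕ}
    (hj1 : 1 ≤ j) (hj2 : j < p*a) (hj1' : 1 ≤ j') (hj2' : j' < p*a)
    (hne : j ≠ j') (hadj : a ∣ j * j') :
    lab p a j + 2 ≤ lab p a j' ∨ lab p a j' + 2 ≤ lab p a j := by
  have h2a : 2*a ≤ p*a := Nat.mul_le_mul_right a hp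
  by_cases hU : a ∣ j <;> by_cases hU' : a ∣ j'
  · have hcne : j / a ≠ j' / a := by
      intro hc
      exact hne (by rw [← Nat.mul_div_cancel' hU, ← Nat.mul_div_cancel' hU', hc])
    rw [lab_U_eq hU, lab_U_eq hU']
    obtain ⟨b, hb⟩ : ∃ b, b = p*a := ⟨_, rfl⟩
    rw [← hb] at h2a ⊢
    omega
  · have b1 := lab_U_bounds hp hap hj1 hj2 hU
    have b2 := lab_nonU_le hp hpa hap hj2' hU'
    obtain ⟨b, hb⟩ : ∃ b, b = p*a := ⟨_, rfl⟩
    rw [← hb] at h2a b1 b2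
    omega
  · have b1 := lab_U_bounds hp hap hj1' hj2' hU'
    have b2 := lab_nonU_le hp hpa hap hj2 hU
    obtain ⟨b, hb⟩ : ∃ b, b = p*a := ⟨_, rfl⟩
    rw [← hb] at h2a b1 b2
    omega
  · have hpj : p ∣ j := by
      by_contra hpj
      exact hU' ((hcop j hpj).dvd_of_dvd_mul_left hadj)
    have hpj' : p ∣ j' := by
      by_contra hpj'
      exact hU ((hcop j' hpj').dvd_of_dvd_mul_right hadj)
    have hAne : labA p a j ≠ labA p a j' := by
      rcases lt_trichotomy j j' with hlt | heq | hgt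
      · exact ne_of_lt (labA_mono hlt hpj hU)
      · exact absurd heq hne
      · exact (ne_of_lt (labA_mono hgt hpj' hU')).symm
    unfold lab
    rw [if_neg hU, if_neg hU', if_pos hpj, if_pos hpj']
    omega

lemma keyLB {α : Type*} [DecidableEq α] :
    ∀ (m : ℕ) (s U : Finset α) (f : α → ℕ), s.card = m → U ⊆ s →
      Set.InjOn f s →
      (∀ u ∈ U, ∀ v ∈ s, v ≠ u → f u + 2 ≤ f v ∨ f v + 2 ≤ f u) →
      s.Nonempty →
      ∃ v ∈ s, s.card + U.card ≤ f v + (if U.card < s.card then 1 else 2) := by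
  intro m
  induction m using Nat.strong_induction_on with
  | _ m IH =>
  intro s U f hm hUs hinj huniv hne
  obtain ⟨w, hw, hwmax⟩ := Finset.exists_max_image s f hne
  have hUcard : U.card ≤ s.card := Finset.card_le_card hUs
  by_cases hcard : s.card = 1
  · refine ⟨w, hw, ?_⟩
    split_ifs <;> omega
  have h2 : 2 ≤ s.card := by
    have := Finset.card_pos.mpr hne; omega
  set s' := s.erase w with hs'
  have hsc : s'.card = s.card - 1 := Finset.card_erase_of_mem hw
  have hne' : s'.Nonempty := Finset.card_pos.mp (by omega)
  have strict : ∀ v ∈ s', f v < f w := by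
    intro v hv
    refine lt_of_le_of_ne (hwmax v (Finset.mem_of_mem_erase hv)) (fun h => ?_)
    exact (Finset.ne_of_mem_erase hv) (hinj (Finset.mem_of_mem_erase hv) hw h)
  have hinj' : Set.InjOn f s' := hinj.mono (fun x hx => Finset.mem_of_mem_erase hx)
  by_cases hwU : w ∈ U
  · set U' := U.erase w with hU'
    have hU's : U' ⊆ s' := Finset.erase_subset_erase _ hUs
    have hU'c : U'.card = U.card - 1 := Finset.card_erase_of_mem hwU
    have hUpos : 1 ≤ U.card := Finset.card_pos.mpr ⟨w, hwU⟩
    obtain ⟨v, hv, hvle⟩ := IH (s.card - 1) (by omega) s' U' f hsc hU's hinj'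
      (fun u hu v hv hvu => huniv u (Finset.mem_of_mem_erase hu) v (Finset.mem_of_mem_erase hv) hvu) hne'
    refine ⟨w, hw, ?_⟩
    have hfw : f v + 2 ≤ f w := by
      rcases huniv w hwU v (Finset.mem_of_mem_erase hv) (Finset.ne_of_mem_erase hv) with h | h
      · have := strict v hv; omega
      · exact h
    rw [hsc, hU'c] at hvle
    split_ifs at hvle ⊢ <;> omega
  · have hU's : U ⊆ s' := fun u hu => Finset.mem_erase.mpr ⟨fun h => hwU (h ▸ hu), hUs hu⟩
    obtain ⟨v, hv, hvle⟩ := IH (s.card - 1) (by omega) s' U f hsc hU's hinj'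
      (fun u hu v hv hvu => huniv u hu v (Finset.mem_of_mem_erase hv) hvu) hne'
    refine ⟨w, hw, ?_⟩
    by_cases hUfull : U.card < s'.card
    · have hfw : f v + 1 ≤ f w := strict v hv
      rw [hsc] at hUfull
      split_ifs at hvle ⊢ <;> omega
    · have hUeq : U = s' := Finset.eq_of_subset_of_card_le hU's (by omega)
      have hvU : v ∈ U := hUeq ▸ hv
      have hfw : f v + 2 ≤ f w := by
        rcases huniv v hvU w hw (fun h => (Finset.ne_of_mem_erase (hUeq ▸ hvU : v ∈ s')) h.symm) with h | h
        · exact h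
        · have := strict v hv; omega
      have hUc : U.card = s.card - 1 := by rw [← hsc, hUeq]
      split_ifs at hvle ⊢ <;> omega

end Helpers

/-- `λ(Γ(Z_{p^n})) = p^{n-1} + p - 3` for `n ≥ 3`. -/
theorem lambda_zdGraph_zmod (p n : ℕ) (hp : p.Prime) (hn : 3 ≤ n) :
    lambdaNumber (zdGraph (ZMod (p ^ n))) = p ^ (n - 1) + p - 3 := by
  classical
  have hp2 : 2 ≤ p := hp.two_le
  have hap : p ≤ p ^ (n - 2) := by
    calc p = p ^ 1 := (pow_one p).symm
    _ ≤ p ^ (n - 2) := Nat.pow_le_pow_right (by omega) (by omega)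
  set a := p ^ (n - 2) with ha
  have hpa : p ∣ a := by rw [ha]; exact dvd_pow_self p (by omega)
  have h2a : 2*a ≤ p*a := Nat.mul_le_mul_right a hp2
  have hcop : ∀ m, ¬ p ∣ m → Nat.Coprime a m := by
    intro m hm
    rw [ha]
    exact ((hp.coprime_iff_not_dvd).mpr hm).pow_left _
  have hn1 : p ^ (n - 1) = p * a := by
    rw [ha, ← pow_succ']
    congr 1
    omega
  have hQ : p ^ n = p * (p * a) := by
    rw [ha, ← pow_succ', ← pow_succ']
    congr 1
    omega
  have hq0 : 0 < p ^ n := pow_pos (by omega) n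
  haveI : NeZero (p ^ n) := ⟨hq0.ne'⟩
  -- basic facts
  have hzero : ∀ x y : ZMod (p^n), x * y = 0 ↔ p^n ∣ x.val * y.val := by
    intro x y
    rw [← ZMod.val_eq_zero, ZMod.val_mul, ← Nat.dvd_iff_mod_eq_zero]
  have hmem : ∀ x : ZMod (p^n), x ∈ zdVertices (ZMod (p^n)) ↔ x.val ≠ 0 ∧ p ∣ x.val := by
    intro x
    simp only [zdVertices, Set.mem_setOf_eq]
    constructor
    · rintro ⟨hx0, y, hy0, hxy⟩
      refine ⟨fun h => hx0 (by rwa [ZMod.val_eq_zero] at h), ?_⟩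
      by_contra hpx
      have hcop' : Nat.Coprime (p^n) x.val := Nat.Coprime.pow_left n ((hp.coprime_iff_not_dvd).mpr hpx)
      have hdvd : p^n ∣ x.val * y.val := (hzero x y).mp hxy
      have hyy : p^n ∣ y.val := hcop'.dvd_of_dvd_mul_left hdvd
      have : y.val = 0 := Nat.eq_zero_of_dvd_of_lt hyy (ZMod.val_lt y)
      exact hy0 (by rwa [ZMod.val_eq_zero] at this)
    · rintro ⟨hx0, hpx⟩
      have hlt : p^(n-1) < p^n := Nat.pow_lt_pow_right hp.one_lt (by omega)
      refine ⟨fun h => hx0 (by rw [h, ZMod.val_zero]), ((p^(n-1) : ℕ) : ZMod (p^n)), ?_, ?_⟩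
      · rw [Ne, ZMod.natCast_eq_zero_iff]
        intro hdvd
        have h1 := Nat.le_of_dvd (pow_pos (by omega) _) hdvd
        omega
      · have hv : ((p^(n-1) : ℕ) : ZMod (p^n)).val = p^(n-1) := ZMod.val_cast_of_lt hlt
        rw [hzero, hv]
        obtain ⟨c, hc⟩ := hpx
        have hpp : p * p^(n-1) = p^n := by
          rw [← pow_succ']
          congr 1
          omega
        exact ⟨c, by rw [hc, ← hpp]; ring⟩
  set V := ↥(zdVertices (ZMod (p^n))) with hV
  set G := zdGraph (ZMod (p^n)) with hG
  have adj_def : ∀ x y : V, G.Adj x y ↔ x ≠ y ∧ (x.1 * y.1 = 0) := fun x y => Iff.rfl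
  have hrepr : ∀ x : V, x.1.val = p * (x.1.val / p) ∧ 1 ≤ x.1.val / p ∧ x.1.val / p < p * a := by
    intro x
    obtain ⟨hv0, hvp⟩ := (hmem x.1).mp x.2
    have hd : p * (x.1.val / p) = x.1.val := Nat.mul_div_cancel' hvp
    have hlt := ZMod.val_lt x.1
    refine ⟨hd.symm, ?_, ?_⟩
    · exact (Nat.one_le_div_iff (by omega)).mpr (Nat.le_of_dvd (by omega) hvp)
    · exact lt_of_mul_lt_mul_left (show p * (x.1.val / p) < p * (p * a) by omega) (by omega)
  have hDvdIff : ∀ jx jy : ℕ, (p^n ∣ (p*jx)*(p*jy)) ↔ a ∣ jx*jy := by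
    intro jx jy
    have e1 : p*(p*a) = (p*p)*a := by ring
    have e2 : (p*jx)*(p*jy) = (p*p)*(jx*jy) := by ring
    rw [hQ, e1, e2, mul_dvd_mul_iff_left ((Nat.mul_pos (show 0 < p by omega) (show 0 < p by omega)).ne' : p*p ≠ 0)]
  have hadj : ∀ x y : V, G.Adj x y ↔ x ≠ y ∧ a ∣ (x.1.val/p) * (y.1.val/p) := by
    intro x y
    rw [adj_def, hzero]
    constructor
    · rintro ⟨hne, hdvd⟩
      refine ⟨hne, ?_⟩
      rw [← hDvdIff]
      rwa [← (hrepr x).1, ← (hrepr y).1]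
    · rintro ⟨hne, hdvd⟩
      refine ⟨hne, ?_⟩
      rw [(hrepr x).1, (hrepr y).1]
      exact (hDvdIff _ _).mpr hdvd
  have hvert : ∀ j, 1 ≤ j → j < p*a → ∃ x : V, x.1.val = p * j := by
    intro j h1 h2
    have hlt : p * j < p^n := by
      rw [hQ]
      exact mul_lt_mul_of_pos_left h2 (show 0 < p by omega)
    refine ⟨⟨((p*j : ℕ) : ZMod (p^n)), ?_⟩, ?_⟩
    · rw [hmem, ZMod.val_cast_of_lt hlt]
      exact ⟨Nat.mul_ne_zero (by omega) (by omega), dvd_mul_right p j⟩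
    · exact ZMod.val_cast_of_lt hlt
  have hvinj : ∀ x y : V, x.1.val = y.1.val → x = y := by
    intro x y h
    exact Subtype.ext (ZMod.val_injective _ h)
  -- universal vertex w0 with j = a
  obtain ⟨w0, hw0⟩ := hvert a (by omega) (by omega)
  have hjw0 : w0.1.val / p = a := by rw [hw0]; exact Nat.mul_div_cancel_left a (by omega)
  -- distance two
  have hdist2 : ∀ x y : V, x ≠ y → ¬ G.Adj x y → G.dist x y = 2 := by
    intro x y hne hnadj
    have hxw : x ≠ w0 := by
      rintro rfl
      exact hnadj ((hadj x y).mpr ⟨hne, by rw [hjw0]; exact Dvd.dvd.mul_right dvd_rfl _⟩)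
    have hyw : y ≠ w0 := by
      rintro rfl
      exact hnadj ((hadj x y).mpr ⟨hne, by rw [hjw0]; exact Dvd.dvd.mul_left dvd_rfl _⟩)
    have haxw : G.Adj x w0 := (hadj x w0).mpr ⟨hxw, by rw [hjw0]; exact dvd_mul_left a _⟩
    have hawy : G.Adj w0 y := (hadj w0 y).mpr ⟨fun h => hyw h.symm, by rw [hjw0]; exact Dvd.dvd.mul_right dvd_rfl _⟩
    let wlk : G.Walk x y := SimpleGraph.Walk.cons haxw (SimpleGraph.Walk.cons hawy SimpleGraph.Walk.nil)
    have hle : G.dist x y ≤ 2 := SimpleGraph.dist_le wlk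
    have h1 : G.dist x y ≠ 1 := fun h => hnadj (SimpleGraph.dist_eq_one_iff_adj.mp h)
    have h0 : G.dist x y ≠ 0 := by
      rw [SimpleGraph.dist_ne_zero_iff_ne_and_reachable]
      exact ⟨hne, ⟨wlk⟩⟩
    omega
  -- Fintype and cardinalities
  haveI : Fintype V := Fintype.ofFinite _
  have hcardV : Fintype.card V = p*a - 1 := by
    have hbij : Function.Bijective (fun x : V => (⟨x.1.val / p - 1, by
        have := (hrepr x).2.2; have := (hrepr x).2.1; omega⟩ : Fin (p*a - 1))) := by
      constructor
      · intro x y hxy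
        apply hvinj
        rw [(hrepr x).1, (hrepr y).1]
        have h1 := (hrepr x).2.1
        have h2 := (hrepr y).2.1
        have : x.1.val / p - 1 = y.1.val / p - 1 := congrArg Fin.val hxy
        have : x.1.val / p = y.1.val / p := by omega
        rw [this]
      · intro i
        obtain ⟨x, hx⟩ := hvert (i.1 + 1) (by omega) (by have := i.2; omega)
        refine ⟨x, ?_⟩
        have hj : x.1.val / p = i.1 + 1 := by rw [hx]; exact Nat.mul_div_cancel_left _ (by omega)
        apply Fin.ext
        simp [hj]
    rw [Fintype.card_of_bijective hbij, Fintype.card_fin]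
  haveI : Nonempty V := ⟨w0⟩
  -- universal finset
  set UF : Finset V := Finset.univ.filter (fun x : V => a ∣ (x.1.val/p)) with hUF
  have hUFadj : ∀ u : V, u ∈ UF → ∀ v : V, v ≠ u → G.Adj u v := by
    intro u hu v hvu
    rw [hUF, Finset.mem_filter] at hu
    exact (hadj u v).mpr ⟨fun h => hvu h.symm, Dvd.dvd.mul_right hu.2 _⟩
  have hUvert : ∀ i, i < p - 1 → ∃ x : V, x.1.val = p * ((i+1)*a) := by
    intro i hi
    refine hvert ((i+1)*a) ?_ ?_
    · have := Nat.mul_pos (show 0 < i+1 by omega) (show 0 < a by omega)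
      omega
    · exact mul_lt_mul_of_pos_right (show i+1 < p by omega) (show 0 < a by omega)
  have hcardU : UF.card = p - 1 := by
    apply Finset.card_eq_of_bijective (fun i hi => (hUvert i hi).choose)
    · -- surjective
      intro x hx
      rw [hUF, Finset.mem_filter] at hx
      obtain ⟨c, hc⟩ := hx.2
      have hj1 := (hrepr x).2.1
      have hj2 := (hrepr x).2.2
      have hc1 : 1 ≤ c := by
        rcases Nat.eq_zero_or_pos c with h0 | h0
        · rw [h0, mul_zero] at hc; omega
        · exact h0
      have hc2 : c < p := by
        have hlt : a * c < a * p := by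
          rw [← hc]
          calc x.1.val/p < p * a := hj2
          _ = a * p := by ring
        exact lt_of_mul_lt_mul_left hlt (by omega)
      have hcp : c - 1 < p - 1 := by omega
      refine ⟨c - 1, hcp, ?_⟩
      apply hvinj
      rw [(hUvert (c-1) hcp).choose_spec, (hrepr x).1, hc]
      congr 1
      have hcc : c - 1 + 1 = c := by omega
      rw [hcc]
      ring
    · -- membership
      intro i hi
      rw [hUF, Finset.mem_filter]
      refine ⟨Finset.mem_univ _, ?_⟩
      rw [(hUvert i hi).choose_spec, Nat.mul_div_cancel_left _ (show 0 < p by omega)]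
      exact dvd_mul_left a (i+1)
    · -- injective
      intro i j hi hj hij
      have hv : ((hUvert i hi).choose : V).1.val = ((hUvert j hj).choose : V).1.val := by rw [hij]
      rw [(hUvert i hi).choose_spec, (hUvert j hj).choose_spec] at hv
      have h1 : (i+1)*a = (j+1)*a := Nat.eq_of_mul_eq_mul_left (by omega) hv
      have h2 := Nat.eq_of_mul_eq_mul_right (show 0 < a by omega) h1
      omega
  have hUlt : UF.card < (Finset.univ : Finset V).card := by
    rw [Finset.card_univ, hcardV, hcardU]
    omega
  -- helper for abs
  have habs : ∀ A B : ℕ, (2:ℤ) ≤ |(A:ℤ) - (B:ℤ)| → A + 2 ≤ B ∨ B + 2 ≤ A := by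
    intro A B h
    rcases abs_cases ((A:ℤ) - (B:ℤ)) with ⟨h1, _⟩ | ⟨h1, _⟩ <;> rw [h1] at h <;> omega
  -- final goal rewrite
  rw [hn1]
  -- upper bound labelling
  have hupper : ∃ f : V → ℕ, IsL21Labelling G f ∧ ∀ v, f v ≤ p*a + p - 3 := by
    refine ⟨fun x => lab p a (x.1.val / p), ⟨?_, ?_⟩, ?_⟩
    · intro u v huv
      show (2:ℤ) ≤ |((lab p a (u.1.val / p) : ℕ) : ℤ) - ((lab p a (v.1.val / p) : ℕ) : ℤ)|
      rw [hadj] at huv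
      obtain ⟨hne, hdvd⟩ := huv
      have hju := hrepr u
      have hjv := hrepr v
      have hjne : u.1.val/p ≠ v.1.val/p := by
        intro h
        exact hne (hvinj u v (by rw [hju.1, hjv.1, h]))
      rcases lab_gap hp2 hpa hap hcop hju.2.1 hju.2.2 hjv.2.1 hjv.2.2 hjne hdvd with h | h
      · exact le_abs.mpr (Or.inr (by push_cast; omega))
      · exact le_abs.mpr (Or.inl (by push_cast; omega))
    · intro u v hdist
      have hne : u ≠ v := by
        rintro rfl
        rw [SimpleGraph.dist_self] at hdist
        omega
      intro hfeq
      have hju := hrepr u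
      have hjv := hrepr v
      have := lab_inj hp2 hpa hap hju.2.1 hju.2.2 hjv.2.1 hjv.2.2 hfeq
      exact hne (hvinj u v (by rw [hju.1, hjv.1, this]))
    · intro x
      show lab p a (x.1.val / p) ≤ p*a + p - 3
      have hjx := hrepr x
      by_cases hU : a ∣ x.1.val/p
      · exact (lab_U_bounds hp2 hap hjx.2.1 hjx.2.2 hU).2
      · have := lab_nonU_le hp2 hpa hap hjx.2.2 hU
        obtain ⟨b, hb⟩ : ∃ b, b = p*a := ⟨_, rfl⟩
        rw [← hb] at this h2a ⊢
        omega
  -- conclude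
  unfold lambdaNumber
  have hmemS : (p*a + p - 3) ∈ {k | ∃ f : V → ℕ, IsL21Labelling G f ∧ ∀ v, f v ≤ k} := hupper
  apply le_antisymm
  · exact Nat.sInf_le hmemS
  · apply le_csInf ⟨_, hmemS⟩
    intro k hk
    have hk' : ∃ f : V → ℕ, IsL21Labelling G f ∧ ∀ v, f v ≤ k := hk
    obtain ⟨f, ⟨hf1, hf2⟩, hfb⟩ := hk' 
    have hinj : Set.InjOn f (Finset.univ : Finset V) := by
      intro x _ y _ hfeq
      by_contra hne
      by_cases hA : G.Adj x y
      · rcases habs _ _ (hf1 x y hA) with h | h <;> omega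
      · exact hf2 x y (hdist2 x y hne hA) hfeq
    have huniv : ∀ u ∈ UF, ∀ v ∈ (Finset.univ : Finset V), v ≠ u → f u + 2 ≤ f v ∨ f v + 2 ≤ f u := by
      intro u hu v _ hvu
      exact habs _ _ (hf1 u v (hUFadj u hu v hvu))
    obtain ⟨v, _, hvle⟩ := keyLB Finset.univ.card Finset.univ UF f rfl (Finset.subset_univ _)
      hinj huniv Finset.univ_nonempty
    rw [if_pos hUlt] at hvle
    rw [Finset.card_univ, hcardV, hcardU] at hvle
    have hfv := hfb v
    obtain ⟨b, hb⟩ : ∃ b, b = p*a := ⟨_, rfl⟩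
    rw [← hb] at hvle h2a ⊢
    omega
end
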